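/- Let A be a constant real n×n matrix. Then A is normally elliptic if and only if there exists a symmetric positive definite matrix H ∈ ℝ^{n×n} such that H·A is positive definite; i.e., a constant-coefficient cross-diffusion system has an entropy structure (with the quadratic entropy density h(u) = ½·uᵀHu) exactly when its diffusion matrix is normally elliptic. -/

import Mathlib

open Matrix

/-- A real square matrix is *normally elliptic* if every eigenvalue
(i.e. every element of the spectrum of the associated complex matrix)
has positive real part. -/
def NormallyElliptic {n : ℕ} (A : Matrix (Fin n) (Fin n) ℝ) : Prop :=
  ∀ μ ∈ spectrum ℂ (A.map Complex.ofReal), 0 < μ.re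

/-- A (possibly nonsymmetric) real matrix is positive definite if `zᵀ M z > 0`
for all nonzero `z ∈ ℝⁿ`. -/
def PosDefMat {n : ℕ} (M : Matrix (Fin n) (Fin n) ℝ) : Prop :=
  ∀ z : Fin n → ℝ, z ≠ 0 → 0 < z ⬝ᵥ M.mulVec z

namespace NormallyEllipticAux

open NormedSpace Filter Topology Module

attribute [local instance] Matrix.linftyOpNormedAddCommGroup Matrix.linftyOpNormedRing
  Matrix.linftyOpNormedAlgebra

variable {n : ℕ}

/-- Applying a matrix to a fixed vector, as a continuous linear map in the matrix. -/
noncomputable def appCLM (v : Fin n → ℂ) : Matrix (Fin n) (Fin n) ℂ →L[ℂ] (Fin n → ℂ) :=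
  LinearMap.toContinuousLinearMap
    { toFun := fun M => M.mulVec v
      map_add' := fun M N => Matrix.add_mulVec M N v
      map_smul' := fun c M => Matrix.smul_mulVec c M v }

/-- The quadratic form `M ↦ x ⬝ᵥ M x`, as a continuous linear map in the matrix. -/
noncomputable def quadCLM (x : Fin n → ℝ) : Matrix (Fin n) (Fin n) ℝ →L[ℝ] ℝ :=
  LinearMap.toContinuousLinearMap
    { toFun := fun M => x ⬝ᵥ M.mulVec x
      map_add' := fun M N => by simp [Matrix.add_mulVec, dotProduct_add]
      map_smul' := fun c M => by simp [Matrix.smul_mulVec] }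

lemma exp_smul_one (c : ℂ) :
    exp (c • (1 : Matrix (Fin n) (Fin n) ℂ)) = Complex.exp c • 1 := by
  rw [Matrix.smul_one_eq_diagonal, Matrix.exp_diagonal]
  have : exp (fun _ : Fin n => c) = fun _ : Fin n => Complex.exp c := by
    rw [Pi.exp_def]; ext i; rw [Complex.exp_eq_exp_ℂ]
  rw [this, ← Matrix.smul_one_eq_diagonal]

lemma aux_decay (j : ℕ) {a : ℝ} (ha : 0 < a) :
    Tendsto (fun t : ℝ => t ^ j * Real.exp (-(a * t))) atTop (𝓝 0) := by
  have h1 := (Real.tendsto_pow_mul_exp_neg_atTop_nhds_zero j).comp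
    (Tendsto.const_mul_atTop ha tendsto_id)
  have h2 := h1.const_mul ((a ^ j)⁻¹)
  rw [mul_zero] at h2
  convert h2 using 2 with t
  simp only [Function.comp]
  field_simp
  simp only [id, mul_comm t a]
  ring

lemma vec_decay (B : Matrix (Fin n) (Fin n) ℂ)
    (hB : ∀ μ ∈ spectrum ℂ B, 0 < μ.re) (v : Fin n → ℂ) :
    Tendsto (fun t : ℝ => (exp ((-(t : ℂ)) • B)).mulVec v) atTop (𝓝 0) := by
  set f := Matrix.toLinAlgEquiv' B with hf
  set S : Submodule ℂ (Fin n → ℂ) :=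
    { carrier := {w | Tendsto (fun t : ℝ => (exp ((-(t : ℂ)) • B)).mulVec w) atTop (𝓝 0)}
      add_mem' := by
        intro a b ha hb
        have := ha.add hb
        rw [add_zero] at this
        simpa [Matrix.mulVec_add] using this
      zero_mem' := by simp [Matrix.mulVec_zero, tendsto_const_nhds]
      smul_mem' := by
        intro c w hw
        have := hw.const_smul c
        rw [smul_zero] at this
        simpa [Matrix.mulVec_smul] using this }
  suffices hv : v ∈ S from hv
  have htop := Module.End.iSup_maxGenEigenspace_eq_top f
  have hle : (⊤ : Submodule ℂ (Fin n → ℂ)) ≤ S := by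
    rw [← htop]
    apply iSup_le
    intro μ w hw
    rcases eq_or_ne w 0 with rfl | hw0
    · exact S.zero_mem
    rw [Module.End.mem_maxGenEigenspace] at hw
    obtain ⟨k, hk⟩ := hw
    have hμ : 0 < μ.re := by
      apply hB
      rw [← AlgEquiv.spectrum_eq Matrix.toLinAlgEquiv' B,
        ← Module.End.hasEigenvalue_iff_mem_spectrum]
      apply Module.End.hasEigenvalue_of_hasGenEigenvalue (k := k)
      rw [Module.End.hasGenEigenvalue_iff, Submodule.ne_bot_iff]
      exact ⟨w, Module.End.mem_genEigenspace_nat.mpr hk, hw0⟩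
    set N : Matrix (Fin n) (Fin n) ℂ := B - μ • 1 with hN
    have hNpow : ∀ j : ℕ, (N ^ j).mulVec w = ((f - μ • 1) ^ j) w := by
      intro j
      have : Matrix.toLinAlgEquiv' (N ^ j) = (f - μ • 1) ^ j := by
        rw [map_pow, map_sub, _root_.map_smul, _root_.map_one]
      rw [← this]; rfl
    have hNzero : ∀ j : ℕ, k ≤ j → (N ^ j).mulVec w = 0 := by
      intro j hj
      rw [hNpow, ← Nat.sub_add_cancel hj, pow_add, Module.End.mul_apply, hk, map_zero]
    have key : ∀ t : ℝ, (exp ((-(t : ℂ)) • B)).mulVec w =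
        ∑ j ∈ Finset.range k,
          (Complex.exp (-(t : ℂ) * μ) * ((-(t : ℂ)) ^ j * ((j.factorial : ℂ))⁻¹)) •
            ((N ^ j).mulVec w) := by
      intro t
      have hsplit : (-(t : ℂ)) • B = (-(t : ℂ) * μ) • (1 : Matrix (Fin n) (Fin n) ℂ)
          + (-(t : ℂ)) • N := by
        rw [hN, smul_sub, smul_smul]
        ring_nf
        abel
      have hcomm : Commute ((-(t : ℂ) * μ) • (1 : Matrix (Fin n) (Fin n) ℂ)) ((-(t : ℂ)) • N) :=
        ((Commute.one_left _).smul_left _).smul_right _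
      rw [hsplit, Matrix.exp_add_of_commute _ _ hcomm, exp_smul_one, smul_mul_assoc,
        one_mul]
      have htsum : (exp ((-(t : ℂ)) • N)).mulVec w
          = ∑' j : ℕ, ((j.factorial : ℂ))⁻¹ • (((-(t : ℂ)) • N) ^ j).mulVec w := by
        have h : (exp ((-(t:ℂ)) • N)).mulVec w = appCLM w (exp ((-(t:ℂ)) • N)) := rfl
        rw [h, exp_eq_tsum ℂ]
        beta_reduce
        erw [ContinuousLinearMap.map_tsum _ (expSeries_summable' (𝕂 := ℂ) _)]
        exact tsum_congr fun j => (Matrix.smul_mulVec ((j.factorial : ℂ)⁻¹) (((-(t:ℂ)) • N) ^ j) w :)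
      rw [Matrix.smul_mulVec, htsum, tsum_eq_sum (s := Finset.range k) ?_]
      · rw [Finset.smul_sum]
        congr 1 with j
        rw [smul_pow, Matrix.smul_mulVec, smul_smul, smul_smul]
        congr 1
        ring
      · intro j hj
        rw [Finset.mem_range, not_lt] at hj
        rw [smul_pow, Matrix.smul_mulVec, hNzero j hj, smul_zero, smul_zero]
    show Tendsto _ atTop (𝓝 0)
    have : Tendsto (fun t : ℝ => ∑ j ∈ Finset.range k,
        (Complex.exp (-(t : ℂ) * μ) * ((-(t : ℂ)) ^ j * ((j.factorial : ℂ))⁻¹)) •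
          ((N ^ j).mulVec w)) atTop (𝓝 0) := by
      have : (0 : Fin n → ℂ) = ∑ j ∈ Finset.range k, (0 : Fin n → ℂ) := by simp
      rw [this]
      apply tendsto_finset_sum
      intro j _
      have hc : Tendsto (fun t : ℝ =>
          Complex.exp (-(t : ℂ) * μ) * ((-(t : ℂ)) ^ j * ((j.factorial : ℂ))⁻¹))
          atTop (𝓝 0) := by
        rw [tendsto_zero_iff_norm_tendsto_zero]
        apply squeeze_zero' (Eventually.of_forall fun t => norm_nonneg _)
          (g := fun t : ℝ => (j.factorial : ℝ)⁻¹ * (t ^ j * Real.exp (-(μ.re * t))))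
        · filter_upwards [eventually_ge_atTop (0:ℝ)] with t ht
          rw [norm_mul, norm_mul, norm_pow]
          have h1 : ‖Complex.exp (-(t:ℂ) * μ)‖ = Real.exp (-(μ.re * t)) := by
            rw [Complex.norm_exp]
            congr 1
            simp [mul_comm]
          have h2 : ‖(-(t:ℂ))‖ = t := by
            simp [abs_of_nonneg ht]
          have h3 : ‖((j.factorial : ℂ))⁻¹‖ = ((j.factorial : ℝ))⁻¹ := by simp
          rw [h1, h2, h3]
          exact le_of_eq (by ring)
        · have := (aux_decay j hμ).const_mul ((j.factorial : ℝ)⁻¹)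
          rwa [mul_zero] at this
      have := hc.smul_const ((N ^ j).mulVec w)
      rwa [zero_smul] at this
    refine Tendsto.congr' ?_ this
    filter_upwards with t
    rw [key t]
  exact hle Submodule.mem_top

lemma exp_map_ofReal (M : Matrix (Fin n) (Fin n) ℝ) :
    (exp M).map Complex.ofReal = exp (M.map Complex.ofReal) := by
  have hf : Continuous fun N : Matrix (Fin n) (Fin n) ℝ => N.map Complex.ofReal :=
    continuous_id.matrix_map Complex.continuous_ofReal
  have h1 : (Complex.ofRealHom.mapMatrix : Matrix (Fin n) (Fin n) ℝ →+* Matrix (Fin n) (Fin n) ℂ)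
      (exp M) = exp (Complex.ofRealHom.mapMatrix M) :=
    map_exp _ hf M
  have h2 : (exp : Matrix (Fin n) (Fin n) ℂ → Matrix (Fin n) (Fin n) ℂ) = exp :=
    rfl
  rw [show (M.map Complex.ofReal) = Complex.ofRealHom.mapMatrix M from rfl, ← h2,
    show ((exp M).map Complex.ofReal) = Complex.ofRealHom.mapMatrix (exp M) from rfl]
  exact h1

lemma exp_decay (A : Matrix (Fin n) (Fin n) ℝ)
    (hvec : ∀ v, Tendsto (fun t : ℝ => (exp ((-(t:ℂ)) • (A.map Complex.ofReal))).mulVec v)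
      atTop (𝓝 0)) :
    Tendsto (fun t : ℝ => exp (t • (-A))) atTop (𝓝 0) := by
  set B := A.map Complex.ofReal with hB
  have hent : ∀ i j, Tendsto (fun t : ℝ => (exp ((-(t:ℂ)) • B)) i j) atTop (𝓝 0) := by
    intro i j
    have h2 := tendsto_pi_nhds.mp (hvec (Pi.single j 1)) i
    simp only [Pi.zero_apply] at h2
    have h3 : ∀ t : ℝ, (exp ((-(t:ℂ)) • B)).mulVec (Pi.single j 1) i
        = (exp ((-(t:ℂ)) • B)) i j := by
      intro t
      rw [Matrix.mulVec_single]
      exact mul_one _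
    exact h2.congr fun t => h3 t
  have hrel : ∀ t : ℝ, ∀ i j, exp (t • (-A)) i j = ((exp ((-(t:ℂ)) • B)) i j).re := by
    intro t i j
    have h1 : (exp (t • (-A))).map Complex.ofReal = exp ((-(t:ℂ)) • B) := by
      rw [exp_map_ofReal]
      congr 1
      rw [hB]
      ext i j
      simp [Matrix.map_apply]
    have := congrFun (congrFun h1 i) j
    simp only [Matrix.map_apply] at this
    rw [← this, Complex.ofReal_re]
  refine tendsto_pi_nhds.mpr ?_
  intro i
  rw [tendsto_pi_nhds]
  intro j
  have := (Complex.continuous_re.tendsto 0).comp (hent i j)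
  simp only [Complex.zero_re] at this
  exact Tendsto.congr (fun t => (hrel t i j).symm) this

lemma lyap_inj (A X : Matrix (Fin n) (Fin n) ℝ)
    (hdecay : Tendsto (fun t : ℝ => exp (t • (-A))) atTop (𝓝 0))
    (hX : Aᵀ * X + X * A = 0) : X = 0 := by
  set E : ℝ → Matrix (Fin n) (Fin n) ℝ := fun t => exp (t • (-A)) with hE
  set g : ℝ → Matrix (Fin n) (Fin n) ℝ := fun t => (E t)ᵀ * (X * E t) with hg
  have hFd : ∀ t, HasDerivAt (fun t => (E t)ᵀ) ((E t)ᵀ * (-Aᵀ)) t := by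
    intro t
    have h2 : HasDerivAt (fun t : ℝ => exp (t • (-Aᵀ))) (exp (t • (-Aᵀ)) * (-Aᵀ)) t :=
      hasDerivAt_exp_smul_const (-Aᵀ) t
    have heq : (fun t : ℝ => exp (t • (-Aᵀ))) = fun t : ℝ => (E t)ᵀ := by
      funext u
      rw [hE]; simp only
      rw [← Matrix.exp_transpose]
      congr 1
    rw [heq] at h2
    convert h2 using 2
    rw [← Matrix.exp_transpose]
    congr 1
  have hgd : ∀ t, HasDerivAt g 0 t := by
    intro t
    have h1 : HasDerivAt E ((-A) * E t) t := hasDerivAt_exp_smul_const' (-A) t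
    have h3 : HasDerivAt (fun t => X * E t) (X * ((-A) * E t)) t := h1.const_mul X
    have h4 := (hFd t).mul h3
    convert h4 using 1
    · rfl
    · rfl
    · rfl
    · rfl
    have h5 : (-Aᵀ) * X + X * (-A) = 0 := by
      rw [neg_mul, mul_neg, ← neg_add, hX, neg_zero]
    have : (E t)ᵀ * -Aᵀ * (X * E t) + (E t)ᵀ * (X * (-A * E t))
        = (E t)ᵀ * (((-Aᵀ) * X + X * (-A)) * E t) := by noncomm_ring
    rw [this, h5, zero_mul, mul_zero]
  have hconst : ∀ t : ℝ, g t = g 0 := by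
    intro t
    exact is_const_of_deriv_eq_zero (fun t => (hgd t).differentiableAt)
      (fun t => (hgd t).deriv) t 0
  have hg0 : g 0 = X := by
    rw [hg]; simp only
    rw [hE]; simp only
    rw [zero_smul, exp_zero, Matrix.transpose_one, one_mul, mul_one]
  have hlim : Tendsto g atTop (𝓝 0) := by
    have h1 : Tendsto (fun t => (E t)ᵀ) atTop (𝓝 0) := by
      have hc : Continuous fun M : Matrix (Fin n) (Fin n) ℝ => Mᵀ :=
        continuous_id.matrix_transpose
      have := (hc.tendsto 0).comp hdecay
      simpa [Function.comp_def] using this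
    have h2 : Tendsto (fun t => X * E t) atTop (𝓝 (X * 0)) := hdecay.const_mul X
    rw [mul_zero] at h2
    have := h1.mul h2
    rwa [mul_zero] at this
  have : Tendsto g atTop (𝓝 X) := by
    rw [show 𝓝 X = 𝓝 (g 0) from by rw [hg0]]
    exact tendsto_const_nhds.congr fun t => (hconst t).symm
  exact tendsto_nhds_unique this hlim

lemma dotProduct_self_pos {y : Fin n → ℝ} (hy : y ≠ 0) : 0 < y ⬝ᵥ y := by
  rcases lt_or_eq_of_le (Finset.sum_nonneg fun i _ => mul_self_nonneg (y i)) with h | h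
  · exact h
  · exact absurd (dotProduct_self_eq_zero.mp h.symm) hy

lemma expVec_ne_zero (A : Matrix (Fin n) (Fin n) ℝ) (t : ℝ) {x : Fin n → ℝ} (hx : x ≠ 0) :
    (exp (t • (-A))).mulVec x ≠ 0 := by
  intro h
  have hinv : exp (-(t • (-A))) * exp (t • (-A)) = 1 := by
    rw [← Matrix.exp_add_of_commute _ _ ((Commute.refl (t • (-A))).neg_left), neg_add_cancel,
      exp_zero]
  have : x = (exp (-(t • (-A))) * exp (t • (-A))).mulVec x := by rw [hinv, Matrix.one_mulVec]
  rw [← Matrix.mulVec_mulVec, h, Matrix.mulVec_zero] at this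
  exact hx this

lemma lyap_posdef (A H : Matrix (Fin n) (Fin n) ℝ)
    (hdecay : Tendsto (fun t : ℝ => exp (t • (-A))) atTop (𝓝 0))
    (hH : Aᵀ * H + H * A = 1) (x : Fin n → ℝ) (hx : x ≠ 0) : 0 < x ⬝ᵥ H.mulVec x := by
  set E : ℝ → Matrix (Fin n) (Fin n) ℝ := fun t => exp (t • (-A)) with hE
  set G : ℝ → Matrix (Fin n) (Fin n) ℝ := fun t => (E t)ᵀ * (H * E t) with hG
  set f : ℝ → ℝ := fun t => quadCLM x (G t) with hf
  have hFd : ∀ t, HasDerivAt (fun t => (E t)ᵀ) ((E t)ᵀ * (-Aᵀ)) t := by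
    intro t
    have h2 : HasDerivAt (fun t : ℝ => exp (t • (-Aᵀ))) (exp (t • (-Aᵀ)) * (-Aᵀ)) t :=
      hasDerivAt_exp_smul_const (-Aᵀ) t
    have heq : (fun t : ℝ => exp (t • (-Aᵀ))) = fun t : ℝ => (E t)ᵀ := by
      funext u
      rw [hE]; simp only
      rw [← Matrix.exp_transpose]
      congr 1
    rw [heq] at h2
    convert h2 using 2
    rw [← Matrix.exp_transpose]
    congr 1
  have hGd : ∀ t, HasDerivAt G (-((E t)ᵀ * E t)) t := by
    intro t
    have h1 : HasDerivAt E ((-A) * E t) t := hasDerivAt_exp_smul_const' (-A) t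
    have h3 : HasDerivAt (fun t => H * E t) (H * ((-A) * E t)) t := h1.const_mul H
    have h4 := (hFd t).mul h3
    convert h4 using 1
    · rfl
    · rfl
    · rfl
    · rfl
    have h5 : (-Aᵀ) * H + H * (-A) = -1 := by
      rw [neg_mul, mul_neg, ← neg_add, hH]
    have h6 : (E t)ᵀ * -Aᵀ * (H * E t) + (E t)ᵀ * (H * (-A * E t))
        = (E t)ᵀ * (((-Aᵀ) * H + H * (-A)) * E t) := by noncomm_ring
    rw [h6, h5]
    noncomm_ring
  have hfd : ∀ t, HasDerivAt f (-(((E t).mulVec x) ⬝ᵥ ((E t).mulVec x))) t := by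
    intro t
    have := (quadCLM x).hasFDerivAt.comp_hasDerivAt t (hGd t)
    convert this using 1
    · rfl
    · rfl
    · rfl
    show -(E t *ᵥ x ⬝ᵥ E t *ᵥ x) = quadCLM x (-((E t)ᵀ * E t))
    rw [map_neg]
    congr 1
    show E t *ᵥ x ⬝ᵥ E t *ᵥ x = x ⬝ᵥ ((E t)ᵀ * E t) *ᵥ x
    rw [← Matrix.mulVec_mulVec, Matrix.dotProduct_mulVec x, Matrix.vecMul_transpose]
  have hfanti : StrictAnti f := by
    apply strictAnti_of_deriv_neg
    intro t
    rw [(hfd t).deriv]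
    have := dotProduct_self_pos (expVec_ne_zero A t hx)
    linarith
  have hflim : Tendsto f atTop (𝓝 0) := by
    have h2 : Tendsto (fun t => H * E t) atTop (𝓝 (H * 0)) := hdecay.const_mul H
    rw [mul_zero] at h2
    have h1 : Tendsto (fun t => (E t)ᵀ) atTop (𝓝 0) := by
      have hc : Continuous fun M : Matrix (Fin n) (Fin n) ℝ => Mᵀ :=
        continuous_id.matrix_transpose
      have := (hc.tendsto 0).comp hdecay
      simpa [Function.comp_def] using this
    have hGlim := h1.mul h2
    rw [mul_zero] at hGlim
    have := ((quadCLM x).continuous.tendsto 0).comp hGlim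
    rw [map_zero] at this
    exact this
  have hf1 : 0 ≤ f 1 := by
    apply le_of_tendsto hflim
    filter_upwards [eventually_ge_atTop (1:ℝ)] with t ht
    rcases eq_or_lt_of_le ht with rfl | h
    · exact le_rfl
    · exact (hfanti h).le
  have hf0 : f 0 = x ⬝ᵥ H.mulVec x := by
    rw [hf, hG, hE]; simp only
    rw [zero_smul, exp_zero, Matrix.transpose_one, one_mul, mul_one]
    rfl
  have := hfanti (show (0:ℝ) < 1 by norm_num)
  rw [hf0] at this
  linarith

lemma exists_lyapunov (A : Matrix (Fin n) (Fin n) ℝ)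
    (hinj : ∀ X : Matrix (Fin n) (Fin n) ℝ, Aᵀ * X + X * A = 0 → X = 0) :
    ∃ H : Matrix (Fin n) (Fin n) ℝ, Hᵀ = H ∧ Aᵀ * H + H * A = 1 := by
  set L : Matrix (Fin n) (Fin n) ℝ →ₗ[ℝ] Matrix (Fin n) (Fin n) ℝ :=
    { toFun := fun X => Aᵀ * X + X * A
      map_add' := fun X Y => by simp [Matrix.mul_add, Matrix.add_mul]; abel
      map_smul' := fun c X => by simp [Matrix.mul_smul, Matrix.smul_mul, smul_add] } with hL
  have hLinj : Function.Injective L := by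
    rw [← LinearMap.ker_eq_bot, LinearMap.ker_eq_bot']
    intro X hX
    exact hinj X hX
  have hLsurj : Function.Surjective L := (LinearMap.injective_iff_surjective).mp hLinj
  obtain ⟨H, hH⟩ := hLsurj 1
  have hH' : Aᵀ * H + H * A = 1 := hH
  refine ⟨H, ?_, hH'⟩
  apply hLinj
  show Aᵀ * Hᵀ + Hᵀ * A = L H
  have h2 : L H = (1 : Matrix (Fin n) (Fin n) ℝ) := hH
  have : Aᵀ * Hᵀ + Hᵀ * A = (Aᵀ * H + H * A)ᵀ := by
    rw [Matrix.transpose_add, Matrix.transpose_mul, Matrix.transpose_mul,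
      Matrix.transpose_transpose]
    abel
  rw [this, h2, hH', Matrix.transpose_one]

lemma reverse_dir (A : Matrix (Fin n) (Fin n) ℝ) (H : Matrix (Fin n) (Fin n) ℝ)
    (hsym : Hᵀ = H) (hH : ∀ z : Fin n → ℝ, z ≠ 0 → 0 < z ⬝ᵥ H.mulVec z)
    (hHA : ∀ z : Fin n → ℝ, z ≠ 0 → 0 < z ⬝ᵥ (H * A).mulVec z)
    (μ : ℂ) (hμ : μ ∈ spectrum ℂ (A.map Complex.ofReal)) : 0 < μ.re := by
  set B := A.map Complex.ofReal with hB
  rw [spectrum.mem_iff] at hμ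
  have hdet : (algebraMap ℂ (Matrix (Fin n) (Fin n) ℂ) μ - B).det = 0 := by
    by_contra hne
    exact hμ ((Matrix.isUnit_iff_isUnit_det _).mpr (isUnit_iff_ne_zero.mpr hne))
  obtain ⟨v, hv0, hv⟩ := (Matrix.exists_mulVec_eq_zero_iff).mpr hdet
  have hev : B.mulVec v = μ • v := by
    rw [Matrix.sub_mulVec] at hv
    have h1 : algebraMap ℂ (Matrix (Fin n) (Fin n) ℂ) μ = μ • 1 := by
      rw [Algebra.algebraMap_eq_smul_one]
    rw [h1, Matrix.smul_mulVec, Matrix.one_mulVec, sub_eq_zero] at hv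
    exact hv.symm
  set x : Fin n → ℝ := fun i => (v i).re with hx
  set y : Fin n → ℝ := fun i => (v i).im with hy
  have hxy : x ≠ 0 ∨ y ≠ 0 := by
    by_contra h
    push_neg at h
    apply hv0
    funext i
    have h1 := congrFun h.1 i
    have h2 := congrFun h.2 i
    simp only [hx, hy, Pi.zero_apply] at h1 h2
    exact Complex.ext h1 h2
  have hAx : A.mulVec x = μ.re • x - μ.im • y := by
    funext i
    have h1 := congrArg Complex.re (congrFun hev i)
    have h2 : ((B *ᵥ v) i).re = (A *ᵥ x) i := by
      simp [Matrix.mulVec, dotProduct, hB, Complex.re_sum, Complex.mul_re, hx]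
    have h3 : ((μ • v) i).re = μ.re * x i - μ.im * y i := by
      simp [hx, hy, Complex.mul_re]
    simp only [Pi.sub_apply, Pi.smul_apply, smul_eq_mul]
    rw [← h2, h1, h3]
  have hAy : A.mulVec y = μ.im • x + μ.re • y := by
    funext i
    have h1 := congrArg Complex.im (congrFun hev i)
    have h2 : ((B *ᵥ v) i).im = (A *ᵥ y) i := by
      simp [Matrix.mulVec, dotProduct, hB, Complex.im_sum, Complex.mul_im, hy]
    have h3 : ((μ • v) i).im = μ.im * x i + μ.re * y i := by
      simp only [Pi.smul_apply, smul_eq_mul, Complex.mul_im, hx, hy]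
      ring
    simp only [Pi.add_apply, Pi.smul_apply, smul_eq_mul]
    rw [← h2, h1, h3]
  have hsympair : ∀ u w : Fin n → ℝ, u ⬝ᵥ H.mulVec w = w ⬝ᵥ H.mulVec u := by
    intro u w
    rw [Matrix.dotProduct_mulVec, ← Matrix.mulVec_transpose, hsym, dotProduct_comm]
  have hHAx : ∀ u w : Fin n → ℝ, u ⬝ᵥ (H * A).mulVec w = u ⬝ᵥ H.mulVec (A.mulVec w) := by
    intro u w
    rw [← Matrix.mulVec_mulVec]
  have e1 : x ⬝ᵥ (H * A).mulVec x = μ.re * (x ⬝ᵥ H.mulVec x) - μ.im * (x ⬝ᵥ H.mulVec y) := by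
    rw [hHAx, hAx, Matrix.mulVec_sub, Matrix.mulVec_smul, Matrix.mulVec_smul,
      dotProduct_sub, dotProduct_smul, dotProduct_smul, smul_eq_mul, smul_eq_mul]
  have e2 : y ⬝ᵥ (H * A).mulVec y = μ.im * (y ⬝ᵥ H.mulVec x) + μ.re * (y ⬝ᵥ H.mulVec y) := by
    rw [hHAx, hAy, Matrix.mulVec_add, Matrix.mulVec_smul, Matrix.mulVec_smul,
      dotProduct_add, dotProduct_smul, dotProduct_smul, smul_eq_mul, smul_eq_mul]
  have hQnonneg : ∀ (M : Matrix (Fin n) (Fin n) ℝ),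
      (∀ z, z ≠ 0 → 0 < z ⬝ᵥ M.mulVec z) → ∀ z : Fin n → ℝ, 0 ≤ z ⬝ᵥ M.mulVec z := by
    intro M hM z
    rcases eq_or_ne z 0 with rfl | hz
    · simp
    · exact (hM z hz).le
  have hsum1 : 0 < x ⬝ᵥ (H * A).mulVec x + y ⬝ᵥ (H * A).mulVec y := by
    rcases hxy with hx0 | hy0
    · have := hHA x hx0
      have h2 := hQnonneg _ hHA y
      linarith
    · have := hHA y hy0
      have h2 := hQnonneg _ hHA x
      linarith
  have hsum2 : 0 < x ⬝ᵥ H.mulVec x + y ⬝ᵥ H.mulVec y := by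
    rcases hxy with hx0 | hy0
    · have := hH x hx0
      have h2 := hQnonneg _ hH y
      linarith
    · have := hH y hy0
      have h2 := hQnonneg _ hH x
      linarith
  have hkey : x ⬝ᵥ (H * A).mulVec x + y ⬝ᵥ (H * A).mulVec y
      = μ.re * (x ⬝ᵥ H.mulVec x + y ⬝ᵥ H.mulVec y) := by
    rw [e1, e2, hsympair y x]
    ring
  nlinarith [hsum1, hsum2, hkey]

end NormallyEllipticAux

/-- A constant diffusion matrix is normally elliptic iff there is a symmetric
positive definite `H` such that `H·A` is positive definite (entropy structure
with quadratic entropy density `h(u) = ½ uᵀHu`). -/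
theorem normallyElliptic_iff_entropyStructure_const {n : ℕ}
    (A : Matrix (Fin n) (Fin n) ℝ) :
    NormallyElliptic A ↔
      ∃ H : Matrix (Fin n) (Fin n) ℝ, H.IsSymm ∧ PosDefMat H ∧
        PosDefMat (H * A) := by
  open NormallyEllipticAux NormedSpace Filter Topology in
  constructor
  · intro hA
    have hdecay : Filter.Tendsto (fun t : ℝ => NormedSpace.exp (t • (-A)))
        Filter.atTop (nhds 0) :=
      exp_decay A (vec_decay (A.map Complex.ofReal) hA)
    obtain ⟨H, hsym, hH⟩ := exists_lyapunov A (fun X hX => lyap_inj A X hdecay hX)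
    refine ⟨H, hsym, fun z hz => lyap_posdef A H hdecay hH z hz, ?_⟩
    intro z hz
    have h1 : z ⬝ᵥ (Aᵀ * H).mulVec z = z ⬝ᵥ (H * A).mulVec z := by
      have h : Aᵀ * H = (H * A)ᵀ := by rw [Matrix.transpose_mul, hsym]
      rw [h, Matrix.dotProduct_mulVec, Matrix.vecMul_transpose, dotProduct_comm]
    have h2 : z ⬝ᵥ ((Aᵀ * H + H * A)).mulVec z = z ⬝ᵥ z := by
      rw [hH, Matrix.one_mulVec]
    rw [Matrix.add_mulVec, dotProduct_add, h1] at h2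
    have h3 := dotProduct_self_pos hz
    linarith
  · rintro ⟨H, hsym, hH, hHA⟩ μ hμ
    exact reverse_dir A H hsym hH hHA μ hμ
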